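/- Adjoint equation solution for the trajectory-based optimization of the linear model: let γ > 0, m ≥ 1, let A be the matrix [[−1−γ/2, γ/2],[γ/2, −1−γ/2]], let z(t) = (c₁·e^{−t} + c₂·e^{(−1−γ)t}, c₁·e^{−t} − c₂·e^{(−1−γ)t}) be a solution of ż = Az, and set ξ = (1+γ)^{2m−1}. Then λ(t) = (c₃·e^{t} + c₄·e^{(1+γ)t} + c₁·e^{−t} + ξ·c₂·e^{(−1−γ)t}, c₃·e^{t} − c₄·e^{(1+γ)t} + c₁·e^{−t} − ξ·c₂·e^{(−1−γ)t}) solves the adjoint differential equation ∂_t λ(t) = −2·A^{2m}·z(t) − A·λ(t) (i.e. λ̇ = −∂H/∂z for the Hamiltonian H(z, λ) = ‖A^m z‖₂² + λᵀAz, using that A is symmetric) for all constants c₃, c₄ ∈ ℝ. -/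

import Mathlib

open Real Matrix

lemma hexp (c a t : ℝ) : HasDerivAt (fun t => c * Real.exp (a * t)) (a * (c * Real.exp (a * t))) t := by
  have := (((hasDerivAt_id t).const_mul a).exp).const_mul c
  simp only [id_eq] at this
  exact this.congr_deriv (by ring)

lemma aux_pow (γ : ℝ) (k : ℕ) (a b : ℝ) :
    ((!![-1 - γ / 2, γ / 2; γ / 2, -1 - γ / 2] : Matrix (Fin 2) (Fin 2) ℝ) ^ k).mulVec
      ![a + b, a - b]
    = ![(-1) ^ k * a + (-(1 + γ)) ^ k * b, (-1) ^ k * a - (-(1 + γ)) ^ k * b] := by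
  induction k with
  | zero => ext i; fin_cases i <;> simp
  | succ n ih =>
    rw [pow_succ', ← Matrix.mulVec_mulVec, ih]
    ext i; fin_cases i <;>
      simp [Matrix.mulVec, dotProduct, Fin.sum_univ_two] <;> ring

theorem stmt15 (γ : ℝ) (hγ : 0 < γ) (m : ℕ) (hm : 1 ≤ m) (c₁ c₂ c₃ c₄ : ℝ)
    (A : Matrix (Fin 2) (Fin 2) ℝ) (hA : A = !![-1 - γ / 2, γ / 2; γ / 2, -1 - γ / 2])
    (ξ : ℝ) (hξ : ξ = (1 + γ) ^ (2 * m - 1))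
    (z lam : ℝ → Fin 2 → ℝ)
    (hz : ∀ t : ℝ, z t = ![c₁ * exp (-t) + c₂ * exp ((-1 - γ) * t),
                           c₁ * exp (-t) - c₂ * exp ((-1 - γ) * t)])
    (hlam : ∀ t : ℝ,
      lam t = ![c₃ * exp t + c₄ * exp ((1 + γ) * t) + c₁ * exp (-t)
                  + ξ * c₂ * exp ((-1 - γ) * t),
                c₃ * exp t - c₄ * exp ((1 + γ) * t) + c₁ * exp (-t)
                  - ξ * c₂ * exp ((-1 - γ) * t)]) :
    (∀ t : ℝ, HasDerivAt z (A.mulVec (z t)) t) ∧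
    (∀ t : ℝ,
      HasDerivAt lam ((-2 : ℝ) • (A ^ (2 * m)).mulVec (z t) - A.mulVec (lam t)) t) := by
  have hzf : z = fun t => ![c₁ * exp (-t) + c₂ * exp ((-1 - γ) * t),
      c₁ * exp (-t) - c₂ * exp ((-1 - γ) * t)] := funext hz
  have hlf : lam = fun t => ![c₃ * exp t + c₄ * exp ((1 + γ) * t) + c₁ * exp (-t)
      + ξ * c₂ * exp ((-1 - γ) * t),
      c₃ * exp t - c₄ * exp ((1 + γ) * t) + c₁ * exp (-t)
      - ξ * c₂ * exp ((-1 - γ) * t)] := funext hlam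
  have hP : (1 + γ) ^ (2 * m) = (1 + γ) * ξ := by
    rw [hξ, ← pow_succ']; congr 1; omega
  have h1 : ∀ t : ℝ, HasDerivAt (fun t => c₁ * exp (-t) + c₂ * exp ((-1 - γ) * t))
      ((-1) * (c₁ * exp (-t)) + (-1 - γ) * (c₂ * exp ((-1 - γ) * t))) t := by
    intro t
    have := (hexp c₁ (-1) t).add (hexp c₂ (-1 - γ) t)
    simpa [neg_one_mul, Pi.add_def, Pi.sub_def] using this
  have h2 : ∀ t : ℝ, HasDerivAt (fun t => c₁ * exp (-t) - c₂ * exp ((-1 - γ) * t))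
      ((-1) * (c₁ * exp (-t)) - (-1 - γ) * (c₂ * exp ((-1 - γ) * t))) t := by
    intro t
    have := (hexp c₁ (-1) t).sub (hexp c₂ (-1 - γ) t)
    simpa [neg_one_mul, Pi.add_def, Pi.sub_def] using this
  constructor
  · intro t
    have hmv : A.mulVec (z t) = ![(-1) * (c₁ * exp (-t)) + (-1 - γ) * (c₂ * exp ((-1 - γ) * t)),
        (-1) * (c₁ * exp (-t)) - (-1 - γ) * (c₂ * exp ((-1 - γ) * t))] := by
      rw [hz t, hA]
      ext i; fin_cases i <;>
        simp [Matrix.mulVec, dotProduct, Fin.sum_univ_two] <;> ring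
    rw [hmv, hzf]
    rw [hasDerivAt_pi]
    intro i; fin_cases i
    · simpa using h1 t
    · simpa using h2 t
  · intro t
    have hpow : (A ^ (2 * m)).mulVec (z t)
        = ![c₁ * exp (-t) + (1 + γ) * ξ * (c₂ * exp ((-1 - γ) * t)),
            c₁ * exp (-t) - (1 + γ) * ξ * (c₂ * exp ((-1 - γ) * t))] := by
      rw [hz t, hA, aux_pow]
      have e1 : ((-1 : ℝ)) ^ (2 * m) = 1 := by
        rw [pow_mul]; norm_num
      have e2 : (-(1 + γ)) ^ (2 * m) = (1 + γ) * ξ := by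
        rw [show (-(1 + γ) : ℝ) = (-1) * (1 + γ) by ring, mul_pow, e1, one_mul, hP]
      rw [e1, e2]; simp
    have hval : (-2 : ℝ) • (A ^ (2 * m)).mulVec (z t) - A.mulVec (lam t)
        = ![1 * (c₃ * exp t) + (1 + γ) * (c₄ * exp ((1 + γ) * t))
              + (-1) * (c₁ * exp (-t)) + (-1 - γ) * (ξ * c₂ * exp ((-1 - γ) * t)),
            1 * (c₃ * exp t) - (1 + γ) * (c₄ * exp ((1 + γ) * t))
              + (-1) * (c₁ * exp (-t)) - (-1 - γ) * (ξ * c₂ * exp ((-1 - γ) * t))] := by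
      rw [hpow, hlam t, hA]
      ext i; fin_cases i <;>
        simp [Matrix.mulVec, dotProduct, Fin.sum_univ_two] <;> ring
    rw [hval, hlf]
    rw [hasDerivAt_pi]
    intro i; fin_cases i
    · have := (((hexp c₃ 1 t).add (hexp c₄ (1 + γ) t)).add (hexp c₁ (-1) t)).add
        (hexp (ξ * c₂) (-1 - γ) t)
      simpa [neg_one_mul, Pi.add_def, Pi.sub_def] using this
    · have := (((hexp c₃ 1 t).sub (hexp c₄ (1 + γ) t)).add (hexp c₁ (-1) t)).sub
        (hexp (ξ * c₂) (-1 - γ) t)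
      simpa [neg_one_mul, Pi.add_def, Pi.sub_def] using this
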